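/- Let V be a finite nonempty type, Ω the set of configurations η : V →₀ ℕ. Let c : Ω × Ω → ℝ be jump rates with c(η,η') ≥ 0, c(η,η) = 0, for each η the set {η' : c(η,η') ≠ 0} finite, and conserving particle number (c(η,η') ≠ 0 implies |η| = |η'|). Define the generator ℒ on f : Ω → ℝ by (ℒf)(η) := Σ_{η'} c(η,η')·(f(η') − f(η)). Let ν : Ω → ℝ be strictly positive and reversible for ℒ, i.e. ν(η)·c(η,η') = ν(η')·c(η',η) for all η, η'. Then ℒ commutes with the annihilation operator 𝒜 (i.e. ℒ∘𝒜 = 𝒜∘ℒ) if and only if the function D(ξ,η) := F(ξ,η)/ν(ξ) is a self-duality function for ℒ, i.e. for all ξ, η ∈ Ω: Σ_{ξ'} c(ξ,ξ')·(D(ξ',η) − D(ξ,η)) = Σ_{η'} c(η,η')·(D(ξ,η') − D(ξ,η)). -/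

import Mathlib

/-- The annihilation operator on functions of configurations. -/
noncomputable def ann {V : Type*} (f : (V →₀ ℕ) → ℝ) : (V →₀ ℕ) → ℝ :=
  fun η => ∑ x ∈ η.support, (η x : ℝ) * f (η - Finsupp.single x 1)

/-- `F ξ η = ∏_{x ∈ supp ξ} C(η x, ξ x)`. -/
def Ffun {V : Type*} (ξ η : V →₀ ℕ) : ℕ := ∏ x ∈ ξ.support, Nat.choose (η x) (ξ x)

/-- The Markov generator associated to jump rates `c`. -/
noncomputable def gen {V : Type*} (c : (V →₀ ℕ) → (V →₀ ℕ) → ℝ)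
    (f : (V →₀ ℕ) → ℝ) : (V →₀ ℕ) → ℝ :=
  fun η => ∑ᶠ η', c η η' * (f η' - f η)

lemma choose_cast (n k : ℕ) : (n : ℝ) * ((n-1).choose k) = ((n:ℝ) - k) * (n.choose k) := by
  cases n with
  | zero =>
    cases k <;> simp
  | succ m =>
    simp only [Nat.succ_sub_one]
    have hnat : (m+1) * Nat.choose m k = (m+1-k) * Nat.choose (m+1) k := by
      have h1 := Nat.add_one_mul_choose_eq m k
      have h2 := Nat.choose_succ_right_eq (m+1) k
      rw [h1, h2, Nat.mul_comm]
    rcases le_or_gt k (m+1) with h | h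
    · have : ((m+1) * Nat.choose m k : ℝ) = ((m+1-k : ℕ) : ℝ) * Nat.choose (m+1) k := by
        exact_mod_cast congrArg (Nat.cast : ℕ → ℝ) hnat
      rw [Nat.cast_sub h] at this
      push_cast at this ⊢
      simpa using this
    · rw [Nat.choose_eq_zero_of_lt (by omega : m < k), Nat.choose_eq_zero_of_lt h]
      simp

lemma Ffun_self {V : Type*} (ξ : V →₀ ℕ) : Ffun ξ ξ = 1 :=
  Finset.prod_eq_one (fun x _ => Nat.choose_self (ξ x))

lemma Ffun_zero_of_lt {V : Type*} {ξ η : V →₀ ℕ} {x : V} (h : η x < ξ x) : Ffun ξ η = 0 := by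
  have hx : x ∈ ξ.support := Finsupp.mem_support_iff.2 (by omega)
  exact Finset.prod_eq_zero hx (Nat.choose_eq_zero_of_lt h)

lemma Ffun_zero_of_tot_lt {V : Type*} [Fintype V] {ξ η : V →₀ ℕ}
    (h : (∑ x, η x) < ∑ x, ξ x) : Ffun ξ η = 0 := by
  by_contra hF
  have : ∀ x, ξ x ≤ η x := by
    intro x
    by_contra hx
    exact hF (@Ffun_zero_of_lt V ξ η x (by omega))
  have h2 : (∑ x, ξ x) ≤ ∑ x, η x := by
    apply Finset.sum_le_sum
    intro i _
    exact this i
  omega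

lemma Ffun_delta {V : Type*} [Fintype V] {ξ η : V →₀ ℕ}
    (h : (∑ x, ξ x) = ∑ x, η x) : (Ffun ξ η : ℝ) = if ξ = η then 1 else 0 := by
  by_cases he : ξ = η
  · simp [he, Ffun_self]
  · simp only [he, if_false]
    by_cases hle : ∀ x, ξ x ≤ η x
    · exfalso
      apply he
      ext x
      have := (Finset.sum_eq_sum_iff_of_le (fun i _ => hle i)).1 h x (Finset.mem_univ x)
      omega
    · push_neg at hle
      obtain ⟨x, hx⟩ := hle
      rw [Ffun_zero_of_lt hx]
      simp

open scoped Classical in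
lemma sub_single_apply {V : Type*} (η : V →₀ ℕ) (x y : V) :
    ((η - Finsupp.single x 1 : V →₀ ℕ)) y = η y - (if x = y then 1 else 0) := by
  rw [Finsupp.tsub_apply, Finsupp.single_apply]

lemma tot_sub_single {V : Type*} [Fintype V] {η : V →₀ ℕ} {x : V} (hx : η x ≠ 0) :
    (∑ y, (η - Finsupp.single x 1 : V →₀ ℕ) y) + 1 = ∑ y, η y := by
  classical
  rw [Finset.sum_eq_sum_sdiff_singleton_add (Finset.mem_univ x) (fun y => (η - Finsupp.single x 1 : V →₀ ℕ) y),
      Finset.sum_eq_sum_sdiff_singleton_add (Finset.mem_univ x) (fun y => η y)]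
  have h1 : ∀ y ∈ Finset.univ \ {x}, (η - Finsupp.single x 1 : V →₀ ℕ) y = η y := by
    intro y hy
    rw [sub_single_apply, if_neg (by simp at hy; exact fun h => hy h.symm)]
    simp
  rw [Finset.sum_congr rfl h1, sub_single_apply, if_pos rfl]
  rw [show (Finset.univ \ {x}).sum ⇑η = ∑ y ∈ Finset.univ \ {x}, η y from rfl]
  omega

lemma mul_Ffun_sub {V : Type*} (ξ η : V →₀ ℕ) (x : V) :
    (η x : ℝ) * Ffun ξ (η - Finsupp.single x 1) = ((η x : ℝ) - ξ x) * Ffun ξ η := by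
  classical
  by_cases hx : η x = 0
  · rcases Nat.eq_zero_or_pos (ξ x) with h0 | h0
    · rw [hx, h0]; push_cast; ring
    · rw [Ffun_zero_of_lt (show η x < ξ x by omega), hx]
      simp
  · by_cases hxs : x ∈ ξ.support
    · have hsub : ∀ y ∈ ξ.support.erase x,
          Nat.choose ((η - Finsupp.single x 1 : V →₀ ℕ) y) (ξ y) = Nat.choose (η y) (ξ y) := by
        intro y hy
        rw [sub_single_apply, if_neg (fun h => (Finset.mem_erase.1 hy).1 h.symm)]
        simp
      rw [show Ffun ξ (η - Finsupp.single x 1)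
            = Nat.choose ((η - Finsupp.single x 1 : V →₀ ℕ) x) (ξ x) *
              ∏ y ∈ ξ.support.erase x, Nat.choose ((η - Finsupp.single x 1 : V →₀ ℕ) y) (ξ y)
          from (Finset.mul_prod_erase _ _ hxs).symm,
        show Ffun ξ η
            = Nat.choose (η x) (ξ x) * ∏ y ∈ ξ.support.erase x, Nat.choose (η y) (ξ y)
          from (Finset.mul_prod_erase _ _ hxs).symm,
        Finset.prod_congr rfl hsub, sub_single_apply, if_pos rfl]
      push_cast
      rw [← mul_assoc, ← mul_assoc, choose_cast (η x) (ξ x)]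
    · have hξx : ξ x = 0 := Finsupp.notMem_support_iff.1 hxs
      have hFF : Ffun ξ (η - Finsupp.single x 1) = Ffun ξ η := by
        apply Finset.prod_congr rfl
        intro y hy
        have hyx : y ≠ x := fun h => hxs (h ▸ hy)
        rw [sub_single_apply, if_neg (fun h => hyx h.symm)]
        simp
      rw [hFF, hξx]; push_cast; ring

lemma ann_Ffun {V : Type*} [Fintype V] (ξ η : V →₀ ℕ) :
    ann (fun ζ => (Ffun ξ ζ : ℝ)) η
      = (((∑ x, η x : ℕ) : ℝ) - ((∑ x, ξ x : ℕ) : ℝ)) * Ffun ξ η := by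
  classical
  unfold ann
  have h1 : ∑ x ∈ η.support, (η x : ℝ) * Ffun ξ (η - Finsupp.single x 1)
      = ∑ x, (η x : ℝ) * Ffun ξ (η - Finsupp.single x 1) := by
    apply Finset.sum_subset (Finset.subset_univ _)
    intro x _ hx
    rw [Finsupp.notMem_support_iff.1 hx]
    simp
  rw [h1, Finset.sum_congr rfl (fun x _ => mul_Ffun_sub ξ η x), ← Finset.sum_mul]
  congr 1
  rw [Finset.sum_sub_distrib]
  push_cast
  ring

section Gen
variable {V : Type*} [Fintype V] (c : (V →₀ ℕ) → (V →₀ ℕ) → ℝ)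
    (hfin : ∀ η, {η' | c η η' ≠ 0}.Finite)

lemma gen_eq_sum (f : (V →₀ ℕ) → ℝ) (η : V →₀ ℕ) :
    gen c f η = ∑ η' ∈ (hfin η).toFinset, c η η' * (f η' - f η) := by
  apply finsum_eq_sum_of_support_subset
  intro η' hη'
  rw [Function.mem_support] at hη'
  rw [Set.Finite.coe_toFinset]
  exact fun h => hη' (by simp [h])

noncomputable def LFs (ξ η : V →₀ ℕ) : ℝ :=
  ∑ η' ∈ (hfin η).toFinset, c η η' * ((Ffun ξ η' : ℝ) - (Ffun ξ η : ℝ))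

noncomputable def LDs (ξ η : V →₀ ℕ) : ℝ :=
  ∑ ξ' ∈ (hfin ξ).toFinset, (c ξ' ξ * (Ffun ξ' η : ℝ) - c ξ ξ' * (Ffun ξ η : ℝ))

lemma gen_Ffun (ξ η : V →₀ ℕ) :
    gen c (fun ζ => (Ffun ξ ζ : ℝ)) η = LFs c hfin ξ η := by
  rw [gen_eq_sum c hfin]; rfl

end Gen

section Core
variable {V : Type*} [Fintype V] {c : (V →₀ ℕ) → (V →₀ ℕ) → ℝ}
    (hfin : ∀ η, {η' | c η η' ≠ 0}.Finite)

lemma mem_hfin {η η' : V →₀ ℕ} (h : η' ∈ (hfin η).toFinset) : c η η' ≠ 0 := by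
  have := (hfin η).mem_toFinset.1 h
  simpa using this

lemma gen_ann_Ffun (hconsv : ∀ η η', c η η' ≠ 0 → (∑ x, η x) = ∑ x, η' x) (ξ η : V →₀ ℕ) :
    gen c (ann fun ζ => (Ffun ξ ζ : ℝ)) η
      = (((∑ x, η x : ℕ) : ℝ) - ((∑ x, ξ x : ℕ) : ℝ)) * LFs c hfin ξ η := by
  rw [gen_eq_sum c hfin]
  unfold LFs
  rw [Finset.mul_sum]
  apply Finset.sum_congr rfl
  intro η' hη'
  have htot : (∑ x, η x) = ∑ x, η' x := hconsv _ _ (mem_hfin hfin hη')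
  rw [ann_Ffun, ann_Ffun, ← htot]
  ring

lemma ann_gen_Ffun (hconsv : ∀ η η', c η η' ≠ 0 → (∑ x, η x) = ∑ x, η' x) {ξ η : V →₀ ℕ}
    (hE : ∀ x ∈ η.support, LFs c hfin ξ (η - Finsupp.single x 1)
        = LDs c hfin ξ (η - Finsupp.single x 1)) :
    ann (gen c fun ζ => (Ffun ξ ζ : ℝ)) η
      = (((∑ x, η x : ℕ) : ℝ) - ((∑ x, ξ x : ℕ) : ℝ)) * LDs c hfin ξ η := by
  unfold ann
  calc ∑ x ∈ η.support, (η x : ℝ) * gen c (fun ζ => (Ffun ξ ζ : ℝ)) (η - Finsupp.single x 1)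
      = ∑ x ∈ η.support, ∑ ξ' ∈ (hfin ξ).toFinset,
          (η x : ℝ) * (c ξ' ξ * (Ffun ξ' (η - Finsupp.single x 1) : ℝ)
            - c ξ ξ' * (Ffun ξ (η - Finsupp.single x 1) : ℝ)) := by
        refine Finset.sum_congr rfl fun x hx => ?_
        rw [gen_Ffun c hfin, hE x hx]
        unfold LDs
        rw [Finset.mul_sum]
    _ = ∑ ξ' ∈ (hfin ξ).toFinset,
          (c ξ' ξ * (∑ x ∈ η.support, (η x : ℝ) * (Ffun ξ' (η - Finsupp.single x 1) : ℝ))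
            - c ξ ξ' * (∑ x ∈ η.support, (η x : ℝ) * (Ffun ξ (η - Finsupp.single x 1) : ℝ))) := by
        rw [Finset.sum_comm]
        refine Finset.sum_congr rfl fun ξ' _ => ?_
        rw [Finset.mul_sum, Finset.mul_sum, ← Finset.sum_sub_distrib]
        refine Finset.sum_congr rfl fun x _ => ?_
        ring
    _ = ∑ ξ' ∈ (hfin ξ).toFinset,
          (((∑ x, η x : ℕ) : ℝ) - ((∑ x, ξ x : ℕ) : ℝ))
            * (c ξ' ξ * (Ffun ξ' η : ℝ) - c ξ ξ' * (Ffun ξ η : ℝ)) := by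
        refine Finset.sum_congr rfl fun ξ' hξ' => ?_
        have htot : (∑ x, ξ x) = ∑ x, ξ' x := hconsv _ _ (mem_hfin hfin hξ')
        have h1 := ann_Ffun ξ' η
        have h2 := ann_Ffun ξ η
        unfold ann at h1 h2
        rw [h1, h2, ← htot]
        ring
    _ = (((∑ x, η x : ℕ) : ℝ) - ((∑ x, ξ x : ℕ) : ℝ)) * LDs c hfin ξ η := by
        rw [LDs, Finset.mul_sum]

end Core

lemma c_ne_symm {V : Type*} {c : (V →₀ ℕ) → (V →₀ ℕ) → ℝ} {ν : (V →₀ ℕ) → ℝ}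
    (hν : ∀ η, 0 < ν η) (hrev : ∀ η η', ν η * c η η' = ν η' * c η' η)
    {a b : V →₀ ℕ} (h : c a b ≠ 0) : c b a ≠ 0 := by
  intro h0
  have h1 := hrev a b
  rw [h0, mul_zero] at h1
  rcases mul_eq_zero.1 h1 with h2 | h2
  · exact (hν a).ne' h2
  · exact h h2

section Base
variable {V : Type*} [Fintype V] {c : (V →₀ ℕ) → (V →₀ ℕ) → ℝ}
    (hfin : ∀ η, {η' | c η η' ≠ 0}.Finite)

lemma base_case (hdiag : ∀ η, c η η = 0)
    (hconsv : ∀ η η', c η η' ≠ 0 → (∑ x, η x) = ∑ x, η' x)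
    {ν : (V →₀ ℕ) → ℝ} (hν : ∀ η, 0 < ν η)
    (hrev : ∀ η η', ν η * c η η' = ν η' * c η' η)
    {ξ η : V →₀ ℕ} (h : (∑ x, η x) ≤ ∑ x, ξ x) :
    LFs c hfin ξ η = LDs c hfin ξ η := by
  classical
  rcases eq_or_lt_of_le h with heq | hlt
  · -- equal totals
    by_cases hξη : ξ = η
    · subst hξη
      unfold LFs LDs
      refine Finset.sum_congr rfl fun η' hη' => ?_
      have hc : c ξ η' ≠ 0 := mem_hfin hfin hη'
      have hne : ξ ≠ η' := fun hh => hc (hh ▸ hdiag ξ)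
      have htot := hconsv _ _ hc
      rw [Ffun_delta htot, Ffun_delta htot.symm, Ffun_self, if_neg hne,
          if_neg (fun hh => hne hh.symm)]
      push_cast
      ring
    · unfold LFs LDs
      have hL : ∑ η' ∈ (hfin η).toFinset, c η η' * ((Ffun ξ η' : ℝ) - (Ffun ξ η : ℝ))
          = ∑ η' ∈ (hfin η).toFinset, if ξ = η' then c η η' else 0 := by
        refine Finset.sum_congr rfl fun η' hη' => ?_
        have hc : c η η' ≠ 0 := mem_hfin hfin hη'
        rw [Ffun_delta (heq.symm ▸ (hconsv _ _ hc) ▸ rfl : (∑ x, ξ x) = ∑ x, η' x),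
            Ffun_delta heq.symm, if_neg hξη]
        by_cases hh : ξ = η' <;> simp [hh]
      have hR : ∑ ξ' ∈ (hfin ξ).toFinset, (c ξ' ξ * (Ffun ξ' η : ℝ) - c ξ ξ' * (Ffun ξ η : ℝ))
          = ∑ ξ' ∈ (hfin ξ).toFinset, if ξ' = η then c ξ' ξ else 0 := by
        refine Finset.sum_congr rfl fun ξ' hξ' => ?_
        have hc : c ξ ξ' ≠ 0 := mem_hfin hfin hξ'
        rw [Ffun_delta ((hconsv _ _ hc) ▸ heq.symm : (∑ x, ξ' x) = ∑ x, η x),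
            Ffun_delta heq.symm, if_neg hξη]
        by_cases hh : ξ' = η <;> simp [hh]
      rw [hL, hR, Finset.sum_ite_eq, Finset.sum_ite_eq']
      by_cases h1 : ξ ∈ (hfin η).toFinset <;> by_cases h2 : η ∈ (hfin ξ).toFinset
      · simp [h1, h2]
      · exfalso
        exact (by simpa using h2 : ¬ c ξ η ≠ 0) (c_ne_symm hν hrev (mem_hfin hfin h1))
      · exfalso
        exact (by simpa using h1 : ¬ c η ξ ≠ 0) (c_ne_symm hν hrev (mem_hfin hfin h2))
      · simp [h1, h2]
  · -- strict: everything vanishes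
    unfold LFs LDs
    rw [Finset.sum_eq_zero, Finset.sum_eq_zero]
    · intro ξ' hξ'
      have hc : c ξ ξ' ≠ 0 := mem_hfin hfin hξ'
      rw [Ffun_zero_of_tot_lt ((hconsv _ _ hc) ▸ hlt), Ffun_zero_of_tot_lt hlt]
      simp
    · intro η' hη'
      have hc : c η η' ≠ 0 := mem_hfin hfin hη'
      rw [Ffun_zero_of_tot_lt ((hconsv _ _ hc) ▸ hlt), Ffun_zero_of_tot_lt hlt]
      simp

end Base

section Directions
variable {V : Type*} [Fintype V] {c : (V →₀ ℕ) → (V →₀ ℕ) → ℝ}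
    (hfin : ∀ η, {η' | c η η' ≠ 0}.Finite)

lemma comm_to_dual (hdiag : ∀ η, c η η = 0)
    (hconsv : ∀ η η', c η η' ≠ 0 → (∑ x, η x) = ∑ x, η' x)
    {ν : (V →₀ ℕ) → ℝ} (hν : ∀ η, 0 < ν η)
    (hrev : ∀ η η', ν η * c η η' = ν η' * c η' η)
    (Hcomm : ∀ f, gen c (ann f) = ann (gen c f)) :
    ∀ ξ η, LFs c hfin ξ η = LDs c hfin ξ η := by
  have main : ∀ n ξ η, (∑ x, η x) = n → LFs c hfin ξ η = LDs c hfin ξ η := by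
    intro n
    induction n with
    | zero =>
      intro ξ η hη
      exact base_case hfin hdiag hconsv hν hrev (by rw [hη]; exact Nat.zero_le _)
    | succ m ih =>
      intro ξ η hη
      rcases le_or_gt (∑ x, η x) (∑ x, ξ x) with hle | hgt
      · exact base_case hfin hdiag hconsv hν hrev hle
      · have hx := congrFun (Hcomm (fun ζ => (Ffun ξ ζ : ℝ))) η
        rw [gen_ann_Ffun hfin hconsv,
            ann_gen_Ffun hfin hconsv (fun x hxs => by
              apply ih
              have := tot_sub_single (Finsupp.mem_support_iff.1 hxs)
              omega)] at hx
        have hne : (((∑ x, η x : ℕ) : ℝ) - ((∑ x, ξ x : ℕ) : ℝ)) ≠ 0 := by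
          have : ((∑ x, ξ x : ℕ) : ℝ) < ((∑ x, η x : ℕ) : ℝ) := by exact_mod_cast hgt
          exact sub_ne_zero.2 this.ne'
        exact mul_left_cancel₀ hne hx
  exact fun ξ η => main _ ξ η rfl

lemma sector_finite (m : ℕ) : {ξ : V →₀ ℕ | (∑ x, ξ x) = m}.Finite := by
  classical
  apply Set.Finite.subset (Set.finite_range
    (fun g : V → Fin (m+1) => Finsupp.equivFunOnFinite.symm (fun x => (g x : ℕ))))
  intro ξ hξ
  have hξ' : (∑ x, ξ x) = m := hξ
  refine ⟨fun x => ⟨ξ x, ?_⟩, ?_⟩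
  · have : ξ x ≤ ∑ y, ξ y :=
      Finset.single_le_sum (f := fun y => ξ y) (fun _ _ => Nat.zero_le _) (Finset.mem_univ x)
    omega
  · simpa using Finsupp.equivFunOnFinite_symm_coe ξ

lemma ann_congr {f g : (V →₀ ℕ) → ℝ} {η : V →₀ ℕ}
    (h : ∀ x ∈ η.support, f (η - Finsupp.single x 1) = g (η - Finsupp.single x 1)) :
    ann f η = ann g η :=
  Finset.sum_congr rfl fun x hx => by rw [h x hx]

lemma ann_linear {ι : Type*} (T : Finset ι) (a : ι → ℝ) (h : ι → (V →₀ ℕ) → ℝ)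
    (η : V →₀ ℕ) :
    ann (fun ζ => ∑ ξ ∈ T, a ξ * h ξ ζ) η = ∑ ξ ∈ T, a ξ * ann (h ξ) η := by
  unfold ann
  simp only [Finset.mul_sum]
  rw [Finset.sum_comm]
  refine Finset.sum_congr rfl fun ξ _ => Finset.sum_congr rfl fun x _ => by ring

lemma gen_linear (hfin : ∀ η, {η' | c η η' ≠ 0}.Finite)
    {ι : Type*} (T : Finset ι) (a : ι → ℝ) (h : ι → (V →₀ ℕ) → ℝ)
    (η : V →₀ ℕ) :
    gen c (fun ζ => ∑ ξ ∈ T, a ξ * h ξ ζ) η = ∑ ξ ∈ T, a ξ * gen c (h ξ) η := by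
  rw [gen_eq_sum c hfin]
  have h2 : ∀ ξ ∈ T, a ξ * gen c (h ξ) η
      = ∑ η' ∈ (hfin η).toFinset, a ξ * (c η η' * (h ξ η' - h ξ η)) := by
    intro ξ _
    rw [gen_eq_sum c hfin, Finset.mul_sum]
  rw [Finset.sum_congr rfl h2, Finset.sum_comm]
  refine Finset.sum_congr rfl fun η' _ => ?_
  rw [← Finset.sum_sub_distrib, Finset.mul_sum]
  refine Finset.sum_congr rfl fun ξ _ => by ring

lemma dual_to_comm (hdiag : ∀ η, c η η = 0)
    (hconsv : ∀ η η', c η η' ≠ 0 → (∑ x, η x) = ∑ x, η' x)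
    (E : ∀ ξ η, LFs c hfin ξ η = LDs c hfin ξ η) :
    ∀ f, gen c (ann f) = ann (gen c f) := by
  classical
  intro f
  funext η
  have core : ∀ ξ, gen c (ann fun ζ => (Ffun ξ ζ : ℝ)) η
      = ann (gen c fun ζ => (Ffun ξ ζ : ℝ)) η := by
    intro ξ
    rw [gen_ann_Ffun hfin hconsv, ann_gen_Ffun hfin hconsv (fun x _ => E ξ _), E ξ η]
  rcases h0 : (∑ x, η x) with _ | m
  · -- zero-particle configuration
    have hη0 : η = 0 := by
      ext x
      have := (Finset.sum_eq_zero_iff).1 h0 x (Finset.mem_univ x)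
      simpa using this
    have hsupp : η.support = ∅ := by rw [hη0]; simp
    have hA : ∀ g : (V →₀ ℕ) → ℝ, ann g η = 0 := by
      intro g; unfold ann; rw [hsupp]; simp
    rw [hA, gen_eq_sum c hfin]
    apply Finset.sum_eq_zero
    intro η' hη'
    have hc := mem_hfin hfin hη'
    have htot := hconsv _ _ hc
    have hη'0 : η' = η := by
      rw [hη0]; ext x
      have h1 : (∑ x, η' x) = 0 := by omega
      have := (Finset.sum_eq_zero_iff).1 h1 x (Finset.mem_univ x)
      simpa using this
    exact absurd (hη'0 ▸ hc) (by simp [hdiag])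
  · set T := (sector_finite (V := V) m).toFinset with hT
    set g : (V →₀ ℕ) → ℝ := fun ζ => ∑ ξ ∈ T, f ξ * (Ffun ξ ζ : ℝ) with hg
    have hfg : ∀ ζ, (∑ x, ζ x) = m → g ζ = f ζ := by
      intro ζ hζ
      show (∑ ξ ∈ T, f ξ * (Ffun ξ ζ : ℝ)) = f ζ
      have h1 : ∀ ξ ∈ T, f ξ * (Ffun ξ ζ : ℝ) = if ξ = ζ then f ξ else 0 := by
        intro ξ hξ
        have hξm : (∑ x, ξ x) = m := by
          have := (sector_finite (V := V) m).mem_toFinset.1 hξ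
          simpa using this
        rw [Ffun_delta (hξm.trans hζ.symm)]
        by_cases hh : ξ = ζ <;> simp [hh]
      rw [Finset.sum_congr rfl h1, Finset.sum_ite_eq',
          if_pos ((sector_finite (V := V) m).mem_toFinset.2 hζ)]
    have step1 : gen c (ann f) η = gen c (ann g) η := by
      have key : ∀ ζ, (∑ x, ζ x) = m + 1 → ann f ζ = ann g ζ := by
        intro ζ hζ
        apply ann_congr
        intro x hx
        apply (hfg _ ?_).symm
        have := tot_sub_single (Finsupp.mem_support_iff.1 hx)
        omega
      rw [gen_eq_sum c hfin, gen_eq_sum c hfin]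
      refine Finset.sum_congr rfl fun η' hη' => ?_
      rw [key η' (by rw [← hconsv _ _ (mem_hfin hfin hη')]; exact h0), key η h0]
    have step2 : ann (gen c f) η = ann (gen c g) η := by
      apply ann_congr
      intro x hx
      have hζ : (∑ y, (η - Finsupp.single x 1 : V →₀ ℕ) y) = m := by
        have := tot_sub_single (Finsupp.mem_support_iff.1 hx)
        omega
      rw [gen_eq_sum c hfin, gen_eq_sum c hfin]
      refine Finset.sum_congr rfl fun ζ' hζ' => ?_
      rw [hfg ζ' (by rw [← hconsv _ _ (mem_hfin hfin hζ')]; exact hζ), hfg _ hζ]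
    rw [step1, step2]
    have hanng : ann g = fun ζ => ∑ ξ ∈ T, f ξ * ann (fun ζ' => (Ffun ξ ζ' : ℝ)) ζ :=
      funext fun ζ => ann_linear T f (fun ξ ζ' => (Ffun ξ ζ' : ℝ)) ζ
    have hgeng : gen c g = fun ζ => ∑ ξ ∈ T, f ξ * gen c (fun ζ' => (Ffun ξ ζ' : ℝ)) ζ :=
      funext fun ζ => gen_linear hfin T f (fun ξ ζ' => (Ffun ξ ζ' : ℝ)) ζ
    calc gen c (ann g) η
        = ∑ ξ ∈ T, f ξ * gen c (ann fun ζ' => (Ffun ξ ζ' : ℝ)) η := by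
          rw [hanng]
          exact gen_linear hfin T f (fun ξ => ann fun ζ' => (Ffun ξ ζ' : ℝ)) η
      _ = ∑ ξ ∈ T, f ξ * ann (gen c fun ζ' => (Ffun ξ ζ' : ℝ)) η :=
          Finset.sum_congr rfl fun ξ _ => by rw [core ξ]
      _ = ann (gen c g) η := by
          rw [hgeng]
          exact (ann_linear T f (fun ξ => gen c fun ζ' => (Ffun ξ ζ' : ℝ)) η).symm

end Directions


/-- **Consistency ⇔ self-duality for reversible systems** (Theorem 4.1):
for a particle-number conserving configuration process with strictly positive
reversible measure `ν`, the generator commutes with the annihilation operator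
iff `D(ξ,η) = F(ξ,η)/ν(ξ)` is a self-duality function. -/
theorem stmt0 {V : Type*} [Fintype V] [Nonempty V]
    (c : (V →₀ ℕ) → (V →₀ ℕ) → ℝ)
    (hpos : ∀ η η', 0 ≤ c η η')
    (hdiag : ∀ η, c η η = 0)
    (hfin : ∀ η, {η' | c η η' ≠ 0}.Finite)
    (hconsv : ∀ η η', c η η' ≠ 0 → (∑ x, η x) = ∑ x, η' x)
    (ν : (V →₀ ℕ) → ℝ) (hν : ∀ η, 0 < ν η)
    (hrev : ∀ η η', ν η * c η η' = ν η' * c η' η) :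
    (∀ f, gen c (ann f) = ann (gen c f)) ↔
      (∀ ξ η : V →₀ ℕ,
        ∑ᶠ ξ', c ξ ξ' * ((Ffun ξ' η : ℝ) / ν ξ' - (Ffun ξ η : ℝ) / ν ξ)
          = ∑ᶠ η', c η η' * ((Ffun ξ η' : ℝ) / ν ξ - (Ffun ξ η : ℝ) / ν ξ)) := by
  classical
  have conv1 : ∀ ξ η : V →₀ ℕ,
      (∑ᶠ η', c η η' * ((Ffun ξ η' : ℝ) / ν ξ - (Ffun ξ η : ℝ) / ν ξ))
        = (ν ξ)⁻¹ * LFs c hfin ξ η := by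
    intro ξ η
    have h1 : (∑ᶠ η', c η η' * ((Ffun ξ η' : ℝ) / ν ξ - (Ffun ξ η : ℝ) / ν ξ))
        = ∑ η' ∈ (hfin η).toFinset,
            c η η' * ((Ffun ξ η' : ℝ) / ν ξ - (Ffun ξ η : ℝ) / ν ξ) := by
      apply finsum_eq_sum_of_support_subset
      intro η' hη'
      rw [Function.mem_support] at hη'
      rw [Set.Finite.coe_toFinset]
      exact fun h => hη' (by simp [h])
    rw [h1, LFs, Finset.mul_sum]
    refine Finset.sum_congr rfl fun η' _ => ?_
    rw [div_sub_div_same]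
    ring
  have conv2 : ∀ ξ η : V →₀ ℕ,
      (∑ᶠ ξ', c ξ ξ' * ((Ffun ξ' η : ℝ) / ν ξ' - (Ffun ξ η : ℝ) / ν ξ))
        = (ν ξ)⁻¹ * LDs c hfin ξ η := by
    intro ξ η
    have h1 : (∑ᶠ ξ', c ξ ξ' * ((Ffun ξ' η : ℝ) / ν ξ' - (Ffun ξ η : ℝ) / ν ξ))
        = ∑ ξ' ∈ (hfin ξ).toFinset,
            c ξ ξ' * ((Ffun ξ' η : ℝ) / ν ξ' - (Ffun ξ η : ℝ) / ν ξ) := by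
      apply finsum_eq_sum_of_support_subset
      intro ξ' hξ'
      rw [Function.mem_support] at hξ'
      rw [Set.Finite.coe_toFinset]
      exact fun h => hξ' (by simp [h])
    rw [h1, LDs, Finset.mul_sum]
    refine Finset.sum_congr rfl fun ξ' _ => ?_
    have hr := hrev ξ ξ'
    have hx := (hν ξ).ne'
    have hx' := (hν ξ').ne'
    field_simp
    linear_combination (Ffun ξ' η : ℝ) * hr
  constructor
  · intro H ξ η
    rw [conv1, conv2, comm_to_dual hfin hdiag hconsv hν hrev H ξ η]
  · intro H
    apply dual_to_comm hfin hdiag hconsv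
    intro ξ η
    have h2 := H ξ η
    rw [conv1, conv2] at h2
    exact (mul_left_cancel₀ (inv_ne_zero (hν ξ).ne') h2).symm
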